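/- Let Γ be a finite tree (a finite connected acyclic simple graph) with vertex set T, and let m : T → ℕ be a function such that deg(v) + m(v) ≥ 3 for every vertex v ∈ T. Then for every nonempty subset W ⊆ T, the number of edges of Γ having exactly one endpoint in W, plus the sum Σ_{v ∈ W} m(v), is at least 3. -/

import Mathlib

open SimpleGraph Walk Finset

/-- Let `Γ` be a finite tree with vertex set `T`, and let `m : T → ℕ` satisfy
`deg v + m v ≥ 3` for every vertex `v`. Then for every nonempty subset `W ⊆ T`, the
number of edges of `Γ` with exactly one endpoint in `W`, plus `∑_{v ∈ W} m v`, is at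
least `3`. -/
theorem tree_external_edges_ge_three {T : Type*} [Fintype T]
    (G : SimpleGraph T) [DecidableRel G.Adj] (hG : G.IsTree)
    (m : T → ℕ) (hdeg : ∀ v : T, G.degree v + m v ≥ 3)
    (W : Finset T) (hW : W.Nonempty) :
    {e ∈ G.edgeSet | ∃ x y : T, e = s(x, y) ∧ x ∈ W ∧ y ∉ W}.ncard
      + ∑ v ∈ W, m v ≥ 3 := by
  classical
  obtain ⟨r, hrW⟩ := hW
  choose f hf hf' using (hG.existsUnique_path · r)
  -- the inside edges and boundary edges
  set Ein : Finset (Sym2 T) := G.edgeFinset.filter (fun e => ∀ v ∈ e, v ∈ W) with hEin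
  set B : Finset (Sym2 T) :=
    G.edgeFinset.filter (fun e => ∃ x y : T, e = s(x, y) ∧ x ∈ W ∧ y ∉ W) with hB
  have hset : {e ∈ G.edgeSet | ∃ x y : T, e = s(x, y) ∧ x ∈ W ∧ y ∉ W} = ↑B := by
    ext e
    simp [hB, Set.mem_setOf_eq, mem_edgeFinset]
  rw [hset, Set.ncard_coe_finset]
  -- the "parent edge" of a non-root vertex
  set pedge : T → Sym2 T := fun w =>
    if hw : w ≠ r then ((f w).firstDart (not_nil_of_ne hw)).edge else s(w, w) with hpedge
  have pedge_eq : ∀ (w : T) (hw : w ≠ r),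
      pedge w = ((f w).firstDart (not_nil_of_ne hw)).edge := fun w hw => dif_pos hw
  -- injectivity of the parent edge map
  have inj : ∀ (a b : T), a ≠ r → b ≠ r → pedge a = pedge b → a = b := by
    intro a b ha hb h
    rw [pedge_eq a ha, pedge_eq b hb] at h
    wlog h' : (f a).length ≤ (f b).length generalizing a b
    · exact (this b a hb ha h.symm (le_of_not_ge h')).symm
    rw [dart_edge_eq_iff] at h
    obtain (h | h) := h
    · exact congrArg (·.fst) h
    · have h1 : ((f a).firstDart <| not_nil_of_ne ha).snd = b := congrArg (·.snd) h
      have h3 := congrArg Walk.length (hf' _ ((f _).tail.copy h1 rfl) ?_)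
      · replace h3 := (length_copy _ _ _).symm.trans h3
        rw [← add_left_inj 1, length_tail_add_one (not_nil_of_ne ha)] at h3
        omega
      · simp only [ne_eq, eq_mp_eq_cast, id_eq, isPath_copy]
        exact (isPath_copy _ _ _).2 (hf _).tail
  -- every edge is the parent edge of one of its endpoints
  have surj : ∀ x y : T, G.Adj x y →
      ∃ w, (w = x ∨ w = y) ∧ w ≠ r ∧ pedge w = s(x, y) := by
    intro x y h
    wlog h' : (f x).length ≤ (f y).length generalizing x y
    · obtain ⟨w, hw1, hw2, hw3⟩ := this y x h.symm (le_of_not_ge h')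
      exact ⟨w, hw1.symm, hw2, by rw [hw3, Sym2.eq_swap]⟩
    have hyr : y ≠ r := by
      rintro rfl
      rw [← hf' _ nil IsPath.nil, length_nil,
        ← hf' _ (.cons h .nil) (IsPath.nil.cons <| by simpa using h.ne),
        length_cons, length_nil] at h'
      simp [Nat.le_zero, Nat.one_ne_zero] at h'
    refine ⟨y, Or.inr rfl, hyr, ?_⟩
    rw [pedge_eq y hyr]
    refine dart_edge_eq_mk'_iff.2 <| Or.inr ?_
    rw [← hf' _ (.cons h.symm (f x)) ((cons_isPath_iff _ _).2 ⟨hf _, fun hy => ?contra⟩)]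
    · simp only [firstDart_toProd, getVert_cons_succ, getVert_zero, Prod.swap_prod_mk]
    case contra =>
      suffices (f x).takeUntil y hy = .cons h .nil by
        rw [← take_spec _ hy] at h'
        simp [this, hf' _ _ ((hf _).dropUntil hy)] at h'
      refine (hG.existsUnique_path _ _).unique ((hf _).takeUntil _) ?_
      simp [h.ne]
  -- a choice of child endpoint for each inside edge
  set F : Sym2 T → T := fun e =>
    if h : ∃ w, w ∈ e ∧ w ≠ r ∧ pedge w = e then h.choose else r with hFdef
  have hF : ∀ e ∈ Ein, F e ∈ e ∧ F e ≠ r ∧ pedge (F e) = e := by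
    intro e he
    have hex : ∃ w, w ∈ e ∧ w ≠ r ∧ pedge w = e := by
      rw [hEin, Finset.mem_filter, mem_edgeFinset] at he
      induction e using Sym2.ind with
      | _ x y =>
        obtain ⟨w, hw1, hw2, hw3⟩ := surj x y (G.mem_edgeSet.1 he.1)
        exact ⟨w, by rcases hw1 with rfl | rfl <;> simp, hw2, hw3⟩
    rw [hFdef]
    simp only [dif_pos hex]
    exact hex.choose_spec
  -- hence the number of inside edges is less than `|W|`
  have hEcard : Ein.card ≤ (W.erase r).card := by
    apply Finset.card_le_card_of_injOn F
    · intro e he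
      obtain ⟨hmem, hne, _⟩ := hF e he
      refine Finset.mem_erase.2 ⟨hne, ?_⟩
      have h2 := (Finset.mem_filter.1 (hEin ▸ he)).2
      exact h2 _ hmem
    · intro e1 h1 e2 h2 heq
      obtain ⟨_, _, hed1⟩ := hF e1 h1
      obtain ⟨_, _, hed2⟩ := hF e2 h2
      rw [← hed1, ← hed2, heq]
  -- handshake over `W`
  have hsum : ∑ v ∈ W, G.degree v = 2 * Ein.card + B.card := by
    have step1 : ∑ v ∈ W, G.degree v
        = ∑ e ∈ G.edgeFinset, (W.filter (fun v => v ∈ e)).card := by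
      calc ∑ v ∈ W, G.degree v
          = ∑ v ∈ W, (G.edgeFinset.filter (fun e => v ∈ e)).card := by
            refine Finset.sum_congr rfl fun v _ => ?_
            rw [← card_incidenceFinset_eq_degree, incidenceFinset_eq_filter]
        _ = ∑ v ∈ W, ∑ e ∈ G.edgeFinset, if v ∈ e then 1 else 0 :=
            Finset.sum_congr rfl fun v _ => Finset.card_filter _ _
        _ = ∑ e ∈ G.edgeFinset, ∑ v ∈ W, if v ∈ e then 1 else 0 := Finset.sum_comm
        _ = _ := Finset.sum_congr rfl fun e _ => (Finset.card_filter _ _).symm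
    have step2 : ∀ e ∈ G.edgeFinset,
        (W.filter (fun v => v ∈ e)).card
          = (if e ∈ Ein then 2 else 0) + (if e ∈ B then 1 else 0) := by
      intro e he
      induction e using Sym2.ind with
      | _ x y =>
        have hadj : G.Adj x y := G.mem_edgeSet.1 (mem_edgeFinset.1 he)
        have hxy : x ≠ y := hadj.ne
        have hmemEin : s(x, y) ∈ Ein ↔ (x ∈ W ∧ y ∈ W) := by
          rw [hEin, Finset.mem_filter]
          simp only [Sym2.mem_iff, he, true_and]
          constructor
          · intro h; exact ⟨h x (Or.inl rfl), h y (Or.inr rfl)⟩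
          · rintro ⟨h1, h2⟩ v (rfl | rfl) <;> assumption
        have hmemB : s(x, y) ∈ B ↔ ((x ∈ W ∧ y ∉ W) ∨ (y ∈ W ∧ x ∉ W)) := by
          rw [hB, Finset.mem_filter]
          simp only [he, true_and]
          constructor
          · rintro ⟨a, b, hab, haW, hbW⟩
            rw [Sym2.eq_iff] at hab
            rcases hab with ⟨rfl, rfl⟩ | ⟨rfl, rfl⟩
            · exact Or.inl ⟨haW, hbW⟩
            · exact Or.inr ⟨haW, hbW⟩
          · rintro (⟨h1, h2⟩ | ⟨h1, h2⟩)
            · exact ⟨x, y, rfl, h1, h2⟩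
            · exact ⟨y, x, Sym2.eq_swap.symm, h1, h2⟩
        by_cases hx : x ∈ W <;> by_cases hy : y ∈ W
        · have hfe : W.filter (fun v => v ∈ s(x, y)) = {x, y} := by
            ext v
            simp only [Finset.mem_filter, Sym2.mem_iff, Finset.mem_insert, Finset.mem_singleton]
            constructor
            · rintro ⟨_, h⟩; exact h
            · rintro (rfl | rfl) <;> simp [hx, hy]
          rw [hfe]
          simp [hmemEin, hmemB, hx, hy, Finset.card_pair hxy]
        · have hfe : W.filter (fun v => v ∈ s(x, y)) = {x} := by
            ext v
            simp only [Finset.mem_filter, Sym2.mem_iff, Finset.mem_singleton]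
            constructor
            · rintro ⟨hv, rfl | rfl⟩
              · rfl
              · exact absurd hv hy
            · rintro rfl; simp [hx]
          rw [hfe]
          simp [hmemEin, hmemB, hx, hy]
        · have hfe : W.filter (fun v => v ∈ s(x, y)) = {y} := by
            ext v
            simp only [Finset.mem_filter, Sym2.mem_iff, Finset.mem_singleton]
            constructor
            · rintro ⟨hv, rfl | rfl⟩
              · exact absurd hv hx
              · rfl
            · rintro rfl; simp [hy]
          rw [hfe]
          simp [hmemEin, hmemB, hx, hy]
        · have hfe : W.filter (fun v => v ∈ s(x, y)) = ∅ := by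
            ext v
            simp only [Finset.mem_filter, Sym2.mem_iff, Finset.notMem_empty, iff_false,
              not_and]
            rintro hv (rfl | rfl)
            · exact hx hv
            · exact hy hv
          rw [hfe]
          simp [hmemEin, hmemB, hx, hy]
    have step3 : ∑ e ∈ G.edgeFinset,
        ((if e ∈ Ein then 2 else 0) + (if e ∈ B then 1 else 0)) = 2 * Ein.card + B.card := by
      rw [Finset.sum_add_distrib, Finset.sum_ite_mem, Finset.sum_ite_mem,
        Finset.inter_eq_right.2 (hEin ▸ Finset.filter_subset _ _),
        Finset.inter_eq_right.2 (hB ▸ Finset.filter_subset _ _)]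
      simp [mul_comm]
    rw [step1, Finset.sum_congr rfl step2, step3]
  -- combine
  have h1 : 3 * W.card ≤ ∑ v ∈ W, (G.degree v + m v) := by
    calc 3 * W.card = ∑ _v ∈ W, 3 := by rw [Finset.sum_const, smul_eq_mul, mul_comm]
      _ ≤ _ := Finset.sum_le_sum fun v _ => hdeg v
  rw [Finset.sum_add_distrib] at h1
  have h4 : 1 ≤ W.card := Finset.card_pos.2 ⟨r, hrW⟩
  have h5 : (W.erase r).card = W.card - 1 := Finset.card_erase_of_mem hrW
  omega
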